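/- Converse of the Factorization Theorem: Suppose for each i : Fin n there is a conditional kernel f_i assigning to each value v ∈ α i and each configuration u of the parents pa(i) a nonnegative real f_i(v, u), with Σ_{v ∈ α i} f_i(v, u) = 1 for every u, and suppose the joint distribution satisfies P(x) = ∏_i f_i(x_i, x_{pa(i)}) for every configuration x (with P x > 0 everywhere). Then for every i and every configuration x one has P(x_i | x_{pa(i)}) = f_i(x_i, x_{pa(i)}) and moreover P(x_i | x_{{0,…,i−1}}) = P(x_i | x_{pa(i)}); that is, each variable is conditionally independent of its remaining predecessors given its parents, so the local Markov assumptions of the DAG hold for P. -/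

import Mathlib

open Finset

/-- The marginal probability `P_S(x)`: the sum of `P` over all configurations
agreeing with `x` on the index set `S`. -/
noncomputable def margProb {n : ℕ} {α : Fin n → Type*}
    [∀ i, Fintype (α i)] [∀ i, DecidableEq (α i)]
    (P : (∀ i, α i) → ℝ) (S : Finset (Fin n)) (x : ∀ i, α i) : ℝ :=
  ∑ y : ∀ i, α i, if ∀ j ∈ S, y j = x j then P y else 0

/-- The conditional probability `P(x_i | x_S) = P_{S ∪ {i}}(x) / P_S(x)`. -/
noncomputable def condProb {n : ℕ} {α : Fin n → Type*}
    [∀ i, Fintype (α i)] [∀ i, DecidableEq (α i)]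
    (P : (∀ i, α i) → ℝ) (i : Fin n) (S : Finset (Fin n)) (x : ∀ i, α i) : ℝ :=
  margProb P (insert i S) x / margProb P S x

section Aux

variable {n : ℕ} {α : Fin n → Type*} [∀ i, Fintype (α i)] [∀ i, DecidableEq (α i)]

/-- Summing over all configurations is the same as pinning coordinate `k` to `x k`
and summing over all values of an update at `k`. -/
lemma sum_split_coord (k : Fin n) (x : ∀ i, α i) (g : (∀ j, α j) → ℝ) :
    ∑ y : ∀ j, α j, g y
      = ∑ y : ∀ j, α j, if y k = x k then ∑ v : α k, g (Function.update y k v) else 0 := by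
  have he : Function.Bijective
      (fun p : ((∀ j, α j) × α k) => ((Function.update p.1 k p.2, p.1 k) : (∀ j, α j) × α k)) := by
    apply Function.Involutive.bijective
    intro p
    simp [Function.update_idem]
  have h2 := Fintype.sum_bijective _ he
      (fun p : ((∀ j, α j) × α k) => if p.1 k = x k then g (Function.update p.1 k p.2) else 0)
      (fun p : ((∀ j, α j) × α k) => if p.2 = x k then g p.1 else 0)
      (fun p => by simp)
  calc ∑ y : ∀ j, α j, g y
      = ∑ p : ((∀ j, α j) × α k), if p.2 = x k then g p.1 else 0 := by
        rw [Fintype.sum_prod_type]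
        simp
    _ = ∑ p : ((∀ j, α j) × α k), if p.1 k = x k then g (Function.update p.1 k p.2) else 0 :=
        h2.symm
    _ = _ := by
        rw [Fintype.sum_prod_type]
        refine Finset.sum_congr rfl fun y _ => ?_
        by_cases h : y k = x k <;> simp [h]

lemma filter_lt_succ (m : ℕ) (k : Fin n) (hk : (k : ℕ) = m) :
    Finset.univ.filter (fun j : Fin n => (j : ℕ) < m + 1)
      = insert k (Finset.univ.filter (fun j : Fin n => (j : ℕ) < m)) := by
  ext j
  simp only [Finset.mem_filter, Finset.mem_univ, true_and, Finset.mem_insert]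
  constructor
  · intro hj
    by_cases h : (j : ℕ) < m
    · exact Or.inr h
    · exact Or.inl (Fin.ext (by omega))
  · rintro (rfl | h) <;> omega

/-- Collapse lemma: if `S` contains every index `< m`, then the constrained sum
evaluates at `x`. -/
lemma sum_agree_collapse (x : ∀ i, α i) (m : ℕ) (S : Finset (Fin n)) (g : (∀ j, α j) → ℝ)
    (hSm : ∀ j : Fin n, (j : ℕ) < m → j ∈ S) :
    (∑ y : ∀ j, α j,
      if (∀ j ∈ S, y j = x j) ∧ (∀ j : Fin n, m ≤ (j : ℕ) → y j = x j) then g y else 0) = g x := by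
  have hiff : ∀ y : ∀ j, α j,
      ((∀ j ∈ S, y j = x j) ∧ (∀ j : Fin n, m ≤ (j : ℕ) → y j = x j)) ↔ y = x := by
    intro y
    constructor
    · rintro ⟨h1, h2⟩
      funext j
      by_cases h : (j : ℕ) < m
      · exact h1 j (hSm j h)
      · exact h2 j (by omega)
    · rintro rfl
      exact ⟨fun _ _ => rfl, fun _ _ => rfl⟩
  calc (∑ y : ∀ j, α j,
        if (∀ j ∈ S, y j = x j) ∧ (∀ j : Fin n, m ≤ (j : ℕ) → y j = x j) then g y else 0)
      = ∑ y : ∀ j, α j, if y = x then g y else 0 :=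
        Finset.sum_congr rfl fun y _ => if_congr (hiff y) rfl rfl
    _ = g x := by rw [Finset.sum_ite_eq' Finset.univ x g]; simp

/-- Main telescoping lemma: marginalizing over the coordinates `≥ m` (none of which
is constrained by `S`) leaves the product of the kernels of the coordinates `< m`. -/
lemma margProb_telescope
    (pa : Fin n → Finset (Fin n)) (hpa : ∀ i, ∀ j ∈ pa i, j < i)
    (f : ∀ i : Fin n, α i → (∀ j : {j : Fin n // j ∈ pa i}, α j.1) → ℝ)
    (hf1 : ∀ (i : Fin n) (u : ∀ j : {j : Fin n // j ∈ pa i}, α j.1), ∑ v : α i, f i v u = 1)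
    (P : (∀ i, α i) → ℝ)
    (hfact : ∀ x : ∀ i, α i, P x = ∏ i, f i (x i) (fun j => x j.1))
    (x : ∀ i, α i) :
    ∀ (d m : ℕ), m + d = n → ∀ S : Finset (Fin n), (∀ j ∈ S, (j : ℕ) < m) →
      margProb P S x = ∑ y : ∀ i, α i,
        if (∀ j ∈ S, y j = x j) ∧ (∀ j : Fin n, m ≤ (j : ℕ) → y j = x j) then
          ∏ j ∈ Finset.univ.filter (fun j : Fin n => (j : ℕ) < m),
            f j (y j) (fun l => y l.1)
        else 0 := by
  intro d
  induction d with
  | zero =>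
    intro m hm S hS
    have hm' : m = n := by omega
    unfold margProb
    refine Finset.sum_congr rfl fun y _ => ?_
    have h1 : (∀ j : Fin n, m ≤ (j : ℕ) → y j = x j) := fun j hj => absurd j.isLt (by omega)
    have h2 : Finset.univ.filter (fun j : Fin n => (j : ℕ) < m) = Finset.univ := by
      ext j
      simp only [Finset.mem_filter, Finset.mem_univ, true_and, iff_true]
      have := j.isLt; omega
    rw [h2]
    by_cases h : ∀ j ∈ S, y j = x j
    · rw [if_pos h, if_pos ⟨h, h1⟩, hfact y]
    · rw [if_neg h, if_neg (fun hc => h hc.1)]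
  | succ d ih =>
    intro m hm S hS
    have hmn : m < n := by omega
    set k : Fin n := ⟨m, hmn⟩ with hkdef
    have hkm : (k : ℕ) = m := rfl
    rw [ih (m + 1) (by omega) S (fun j hj => Nat.lt_succ_of_lt (hS j hj))]
    rw [sum_split_coord k x]
    refine Finset.sum_congr rfl fun y _ => ?_
    have hne : ∀ (v : α k) (j : Fin n), (j : ℕ) ≠ m → Function.update y k v j = y j := by
      intro v j hj
      exact Function.update_of_ne (fun h => hj (by rw [h])) v y
    have hupd : ∀ v : α k,
        (if (∀ j ∈ S, Function.update y k v j = x j) ∧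
            (∀ j : Fin n, m + 1 ≤ (j : ℕ) → Function.update y k v j = x j) then
          ∏ j ∈ Finset.univ.filter (fun j : Fin n => (j : ℕ) < m + 1),
            f j (Function.update y k v j) (fun l => Function.update y k v l.1)
        else 0)
        = if (∀ j ∈ S, y j = x j) ∧ (∀ j : Fin n, m + 1 ≤ (j : ℕ) → y j = x j) then
            f k v (fun l => y l.1) *
              ∏ j ∈ Finset.univ.filter (fun j : Fin n => (j : ℕ) < m),
                f j (y j) (fun l => y l.1)
          else 0 := by
      intro v
      have hcond : ((∀ j ∈ S, Function.update y k v j = x j) ∧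
          (∀ j : Fin n, m + 1 ≤ (j : ℕ) → Function.update y k v j = x j)) ↔
          ((∀ j ∈ S, y j = x j) ∧ (∀ j : Fin n, m + 1 ≤ (j : ℕ) → y j = x j)) := by
        constructor
        · rintro ⟨h1, h2⟩
          exact ⟨fun j hj => by rw [← hne v j (by have := hS j hj; omega)]; exact h1 j hj,
            fun j hj => by rw [← hne v j (by omega)]; exact h2 j hj⟩
        · rintro ⟨h1, h2⟩
          exact ⟨fun j hj => by rw [hne v j (by have := hS j hj; omega)]; exact h1 j hj,
            fun j hj => by rw [hne v j (by omega)]; exact h2 j hj⟩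
      have hprod : (∏ j ∈ Finset.univ.filter (fun j : Fin n => (j : ℕ) < m + 1),
            f j (Function.update y k v j) (fun l => Function.update y k v l.1))
          = f k v (fun l => y l.1) *
            ∏ j ∈ Finset.univ.filter (fun j : Fin n => (j : ℕ) < m),
              f j (y j) (fun l => y l.1) := by
        rw [filter_lt_succ m k rfl, Finset.prod_insert (by simp; omega)]
        congr 1
        · have h1 : Function.update y k v k = v := Function.update_self k v y
          have h2 : (fun l : {l : Fin n // l ∈ pa k} => Function.update y k v l.1)
              = fun l : {l : Fin n // l ∈ pa k} => y l.1 := by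
            funext l
            have hl : (l.1 : ℕ) < (k : ℕ) := Fin.lt_def.mp (hpa k l.1 l.2)
            exact hne v l.1 (by omega)
          rw [h1, h2]
        · refine Finset.prod_congr rfl fun j hj => ?_
          simp only [Finset.mem_filter, Finset.mem_univ, true_and] at hj
          have h2 : (fun l : {l : Fin n // l ∈ pa j} => Function.update y k v l.1)
              = fun l : {l : Fin n // l ∈ pa j} => y l.1 := by
            funext l
            have hl : (l.1 : ℕ) < (j : ℕ) := Fin.lt_def.mp (hpa j l.1 l.2)
            exact hne v l.1 (by omega)
          rw [hne v j (by omega), h2]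
      rw [hprod]
      exact if_congr hcond rfl rfl
    by_cases hyk : y k = x k
    · rw [if_pos hyk, Finset.sum_congr rfl fun v _ => hupd v]
      by_cases hC : (∀ j ∈ S, y j = x j) ∧ (∀ j : Fin n, m + 1 ≤ (j : ℕ) → y j = x j)
      · have hCm : (∀ j ∈ S, y j = x j) ∧ (∀ j : Fin n, m ≤ (j : ℕ) → y j = x j) := by
          refine ⟨hC.1, fun j hj => ?_⟩
          by_cases h : (j : ℕ) = m
          · have hjk : j = k := Fin.ext (by omega)
            rw [hjk]; exact hyk
          · exact hC.2 j (by omega)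
        simp only [if_pos hC, if_pos hCm]
        rw [← Finset.sum_mul, hf1 k _, one_mul]
      · have hCm : ¬((∀ j ∈ S, y j = x j) ∧ (∀ j : Fin n, m ≤ (j : ℕ) → y j = x j)) := by
          intro h
          exact hC ⟨h.1, fun j hj => h.2 j (by omega)⟩
        simp only [if_neg hC, if_neg hCm, Finset.sum_const_zero]
    · have hCm : ¬((∀ j ∈ S, y j = x j) ∧ (∀ j : Fin n, m ≤ (j : ℕ) → y j = x j)) := by
        intro h
        exact hyk (h.2 k (by omega))
      rw [if_neg hyk, if_neg hCm]

end Aux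

/-- Converse of the Factorization Theorem: if `P (x) = ∏ i, f i (x i) (x|pa i)` for
conditional kernels `f i` (nonnegative, summing to one in the first argument),
then `P(x_i | x_{pa i}) = f i (x i) (x|pa i)` and each variable is conditionally
independent of its remaining predecessors given its parents, i.e. the local
Markov assumptions hold for `P`. -/
theorem factorization_theorem_converse {n : ℕ} (hn : 1 ≤ n) {α : Fin n → Type*}
    [∀ i, Fintype (α i)] [∀ i, Nonempty (α i)] [∀ i, DecidableEq (α i)]
    (P : (∀ i, α i) → ℝ)
    (hpos : ∀ x, 0 < P x) (hsum : ∑ x, P x = 1)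
    (pa : Fin n → Finset (Fin n)) (hpa : ∀ i, ∀ j ∈ pa i, j < i)
    (f : ∀ i : Fin n, α i → (∀ j : {j : Fin n // j ∈ pa i}, α j.1) → ℝ)
    (hf0 : ∀ (i : Fin n) (v : α i) (u : ∀ j : {j : Fin n // j ∈ pa i}, α j.1),
      0 ≤ f i v u)
    (hf1 : ∀ (i : Fin n) (u : ∀ j : {j : Fin n // j ∈ pa i}, α j.1),
      ∑ v : α i, f i v u = 1)
    (hfact : ∀ x : ∀ i, α i, P x = ∏ i, f i (x i) (fun j => x j.1)) :
    ∀ (i : Fin n) (x : ∀ i, α i),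
      condProb P i (pa i) x = f i (x i) (fun j => x j.1) ∧
      condProb P i (Finset.Iio i) x = condProb P i (pa i) x := by
  intro i x
  have hi : (i : ℕ) < n := i.isLt
  have htele := margProb_telescope pa hpa f hf1 P hfact x
  -- positivity of all marginals
  have hmargpos : ∀ S : Finset (Fin n), 0 < margProb P S x := by
    intro S
    unfold margProb
    apply Finset.sum_pos'
    · intro y _
      by_cases h : ∀ j ∈ S, y j = x j
      · rw [if_pos h]; exact (hpos y).le
      · rw [if_neg h]
    · refine ⟨x, Finset.mem_univ x, ?_⟩
      rw [if_pos (fun _ _ => rfl)]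
      exact hpos x
  -- marginal over pa i
  have hQ : margProb P (pa i) x
      = ∑ y : ∀ j, α j,
        if (∀ j ∈ pa i, y j = x j) ∧ (∀ j : Fin n, (i : ℕ) ≤ (j : ℕ) → y j = x j) then
          ∏ j ∈ Finset.univ.filter (fun j : Fin n => (j : ℕ) < (i : ℕ)),
            f j (y j) (fun l => y l.1)
        else 0 :=
    htele (n - (i : ℕ)) (i : ℕ) (by omega) (pa i)
      (fun j hj => Fin.lt_def.mp (hpa i j hj))
  -- marginal over insert i (pa i)
  have hins : margProb P (insert i (pa i)) x
      = f i (x i) (fun l => x l.1) * margProb P (pa i) x := by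
    rw [hQ, htele (n - ((i : ℕ) + 1)) ((i : ℕ) + 1) (by omega) (insert i (pa i))
      (fun j hj => by
        rcases Finset.mem_insert.mp hj with rfl | h
        · omega
        · exact Nat.lt_succ_of_lt (Fin.lt_def.mp (hpa i j h))), Finset.mul_sum]
    refine Finset.sum_congr rfl fun y _ => ?_
    have hC : ((∀ j ∈ insert i (pa i), y j = x j) ∧
        (∀ j : Fin n, (i : ℕ) + 1 ≤ (j : ℕ) → y j = x j)) ↔
        ((∀ j ∈ pa i, y j = x j) ∧ (∀ j : Fin n, (i : ℕ) ≤ (j : ℕ) → y j = x j)) := by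
      constructor
      · rintro ⟨h1, h2⟩
        refine ⟨fun j hj => h1 j (Finset.mem_insert_of_mem hj), fun j hj => ?_⟩
        by_cases h : (j : ℕ) = (i : ℕ)
        · have hji : j = i := Fin.ext h
          rw [hji]; exact h1 i (Finset.mem_insert_self _ _)
        · exact h2 j (by omega)
      · rintro ⟨h1, h2⟩
        refine ⟨fun j hj => ?_, fun j hj => h2 j (by omega)⟩
        rcases Finset.mem_insert.mp hj with rfl | hj'
        · exact h2 j (le_refl _)
        · exact h1 j hj'
    by_cases hc : (∀ j ∈ pa i, y j = x j) ∧ (∀ j : Fin n, (i : ℕ) ≤ (j : ℕ) → y j = x j)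
    · rw [if_pos (hC.mpr hc), if_pos hc]
      rw [filter_lt_succ (i : ℕ) i rfl, Finset.prod_insert (by simp)]
      have harg : (fun l : {l : Fin n // l ∈ pa i} => y l.1)
          = fun l : {l : Fin n // l ∈ pa i} => x l.1 := by
        funext l
        exact hc.1 l.1 l.2
      rw [hc.2 i (le_refl _), harg]
    · rw [if_neg (fun h => hc (hC.mp h)), if_neg hc, mul_zero]
  -- marginal over Iio i
  have hIio : margProb P (Finset.Iio i) x
      = ∏ j ∈ Finset.univ.filter (fun j : Fin n => (j : ℕ) < (i : ℕ)),
          f j (x j) (fun l => x l.1) := by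
    rw [htele (n - (i : ℕ)) (i : ℕ) (by omega) (Finset.Iio i)
      (fun j hj => Fin.lt_def.mp (Finset.mem_Iio.mp hj))]
    exact sum_agree_collapse x (i : ℕ) (Finset.Iio i) _
      (fun j hj => Finset.mem_Iio.mpr (Fin.lt_def.mpr hj))
  -- marginal over Iic i
  have hIic : margProb P (Finset.Iic i) x
      = f i (x i) (fun l => x l.1) *
        ∏ j ∈ Finset.univ.filter (fun j : Fin n => (j : ℕ) < (i : ℕ)),
          f j (x j) (fun l => x l.1) := by
    rw [htele (n - ((i : ℕ) + 1)) ((i : ℕ) + 1) (by omega) (Finset.Iic i)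
      (fun j hj => by
        have := Fin.le_def.mp (Finset.mem_Iic.mp hj)
        omega)]
    rw [sum_agree_collapse x ((i : ℕ) + 1) (Finset.Iic i) _
      (fun j hj => Finset.mem_Iic.mpr (Fin.le_def.mpr (by omega)))]
    rw [filter_lt_succ (i : ℕ) i rfl, Finset.prod_insert (by simp)]
  have hQpos : 0 < margProb P (pa i) x := hmargpos (pa i)
  have hApos : 0 < margProb P (Finset.Iio i) x := hmargpos (Finset.Iio i)
  constructor
  · unfold condProb
    rw [hins, mul_div_assoc, div_self hQpos.ne', mul_one]
  · unfold condProb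
    rw [Finset.Iio_insert, hIic, hIio, hins, mul_div_assoc, mul_div_assoc,
      div_self hQpos.ne', div_self (hIio ▸ hApos).ne', mul_one]
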